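/- A simplicial map between simplicial spaces is a right fibration if and only if it is cartesian on each last-point inclusion [0] → [n]; that is, if for every n the square formed by the maps induced by the last-vertex inclusion is a pullback, then the map is cartesian on all last-point-preserving maps of Δ. -/
import Mathlib


open CategoryTheory SimplexCategory Opposite

namespace Paper

/-- A monotone map in `Δ` is last-point-preserving. -/
def LastPreserving {a b : SimplexCategory} (f : a ⟶ b) : Prop :=
  f.toOrderHom (Fin.last a.len) = Fin.last b.len

/-- A monotone map in `Δ` is active (endpoint-preserving). -/
def Active {a b : SimplexCategory} (f : a ⟶ b) : Prop :=
  f.toOrderHom 0 = 0 ∧ LastPreserving f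

universe u

variable {X Y : SimplexCategoryᵒᵖ ⥤ Type u}

/-- A simplicial map `p : Y ⟶ X` is cartesian on a map `f` of `Δ` if the
corresponding naturality square is a pullback. -/
def IsCartesianOn (p : Y ⟶ X) {a b : SimplexCategory} (f : a ⟶ b) : Prop :=
  IsPullback (Y.map f.op) (p.app (op b)) (p.app (op a)) (X.map f.op)

/-- A simplicial map is a right fibration if it is cartesian on every
last-point-preserving map of `Δ`. -/
def IsRightFib (p : Y ⟶ X) : Prop :=
  ∀ {a b : SimplexCategory} (f : a ⟶ b), LastPreserving f → IsCartesianOn p f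

/-- A simplicial map is culf if it is cartesian on every active map of `Δ`. -/
def IsCulf (p : Y ⟶ X) : Prop :=
  ∀ {a b : SimplexCategory} (f : a ⟶ b), Active f → IsCartesianOn p f

/-- A simplicial map is a right fibration if and only if it is cartesian on
each last-point inclusion `[0] ⟶ [n]`. -/
theorem isRightFib_iff_cartesian_on_last_inclusions (p : Y ⟶ X) :
    IsRightFib p ↔ ∀ m : ℕ,
      IsCartesianOn p (SimplexCategory.const (SimplexCategory.mk 0)
        (SimplexCategory.mk m) (Fin.last m)) := by
  constructor
  · intro h m
    exact h _ rfl
  · intro h a b f hf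
    have Ha := h a.len
    have Hb := h b.len
    have hg : (SimplexCategory.const (SimplexCategory.mk 0) (SimplexCategory.mk a.len)
        (Fin.last a.len)) ≫ f
        = SimplexCategory.const (SimplexCategory.mk 0) (SimplexCategory.mk b.len)
        (Fin.last b.len) := by
      rw [SimplexCategory.const_comp]
      exact congrArg ((SimplexCategory.mk 0).const b) hf
    have comp : Y.map f.op ≫ Y.map ((SimplexCategory.const (SimplexCategory.mk 0)
        (SimplexCategory.mk a.len) (Fin.last a.len)).op)
        = Y.map ((SimplexCategory.const (SimplexCategory.mk 0) (SimplexCategory.mk b.len)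
        (Fin.last b.len)).op) := by
      rw [← Y.map_comp, ← op_comp, hg]
    have compX : X.map f.op ≫ X.map ((SimplexCategory.const (SimplexCategory.mk 0)
        (SimplexCategory.mk a.len) (Fin.last a.len)).op)
        = X.map ((SimplexCategory.const (SimplexCategory.mk 0) (SimplexCategory.mk b.len)
        (Fin.last b.len)).op) := by
      rw [← X.map_comp, ← op_comp, hg]
    refine IsPullback.of_right ?_ (p.naturality f.op) Ha
    rw [comp, compX]
    exact Hb

end Paper
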